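/- Let $\alpha, u, v \in \mathbb{R}$, set $F = \sqrt{1 + (\alpha^2+2)u^2}$, $x = \dfrac{u}{F + \alpha u}$, and $y = \dfrac{v}{F + \alpha u}$. Then $F + \alpha u > 0$, $1 - 2x(\alpha + x) = (F + \alpha u)^{-2} > 0$, and $\dfrac{x^2 + y^2}{1 - 2x(\alpha + x)} = u^2 + v^2$. -/

import Mathlib

open Real

theorem cr1_change_of_variables
    (α u v : ℝ)
    (F : ℝ) (hF : F = Real.sqrt (1 + (α ^ 2 + 2) * u ^ 2))
    (x y : ℝ) (hx : x = u / (F + α * u)) (hy : y = v / (F + α * u)) :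
    0 < F + α * u ∧
    1 - 2 * x * (α + x) = (F + α * u) ^ (-2 : ℤ) ∧
    0 < (1 : ℝ) - 2 * x * (α + x) ∧
    (x ^ 2 + y ^ 2) / (1 - 2 * x * (α + x)) = u ^ 2 + v ^ 2 := by
  have hF0 : 0 ≤ F := hF ▸ Real.sqrt_nonneg _
  have hF2 : F ^ 2 = 1 + (α ^ 2 + 2) * u ^ 2 := by
    rw [hF, sq, Real.mul_self_sqrt (by positivity)]
  have hD : 0 < F + α * u := by nlinarith [sq_nonneg (F + α * u), sq_nonneg u]
  have hDne : F + α * u ≠ 0 := ne_of_gt hD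
  have key : 1 - 2 * x * (α + x) = ((F + α * u) ^ 2)⁻¹ := by
    rw [hx]
    field_simp
    have hDne' : F + u * α ≠ 0 := by rwa [mul_comm u α]
    field_simp
    nlinarith [hF2, sq_nonneg (F*u), sq_nonneg u]
  refine ⟨hD, ?_, ?_, ?_⟩
  · rw [key, zpow_neg, zpow_two]; rw [sq]
  · rw [key]; positivity
  · rw [key, hx, hy]
    rw [div_eq_iff (by positivity)]
    field_simp
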